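/- For every permutation q of {1,…,n}, the quantities π_q = ∏_{i=1}^{n-1} λ_{q_i}/(∑_{j=i}^{n} λ_{q_j}) satisfy the global balance equation π_q · (∑_{i=1}^n λ_{q_i}) = λ_{q_1} · ∑_{i=1}^n π_{h_i^{-1}(q)}, where h_i^{-1}(q) denotes the permutation obtained from q by moving its first element q_1 to position i (i.e., h_i^{-1}(q) = (q_2,…,q_i,q_1,q_{i+1},…,q_n), with h_1^{-1}(q)=q). -/

import Mathlib

private def aseq {N : ℕ} (lam : Fin (N + 1) → ℝ) (σ : Equiv.Perm (Fin (N + 1))) : ℕ → ℝ :=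
  fun k => if h : k < N + 1 then lam (σ ⟨k, h⟩) else 0

private def sseq {N : ℕ} (lam : Fin (N + 1) → ℝ) (σ : Equiv.Perm (Fin (N + 1))) : ℕ → ℝ :=
  fun k => ∑ j ∈ Finset.Ico k (N + 1), aseq lam σ j

private lemma aseq_val {N : ℕ} (lam : Fin (N + 1) → ℝ) (σ : Equiv.Perm (Fin (N + 1)))
    (x : Fin (N + 1)) : lam (σ x) = aseq lam σ (x : ℕ) := by
  simp [aseq]
  intro h; have := x.isLt; omega

private lemma aseq_pos {N : ℕ} {lam : Fin (N + 1) → ℝ} (hlam : ∀ i, 0 < lam i)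
    (σ : Equiv.Perm (Fin (N + 1))) {k : ℕ} (hk : k < N + 1) : 0 < aseq lam σ k := by
  simp only [aseq, dif_pos hk]; exact hlam _

private lemma aseq_nonneg {N : ℕ} {lam : Fin (N + 1) → ℝ} (hlam : ∀ i, 0 < lam i)
    (σ : Equiv.Perm (Fin (N + 1))) (k : ℕ) : 0 ≤ aseq lam σ k := by
  unfold aseq; split
  · exact (hlam _).le
  · exact le_rfl

private lemma sseq_nonneg {N : ℕ} {lam : Fin (N + 1) → ℝ} (hlam : ∀ i, 0 < lam i)
    (σ : Equiv.Perm (Fin (N + 1))) (k : ℕ) : 0 ≤ sseq lam σ k :=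
  Finset.sum_nonneg fun _ _ => aseq_nonneg hlam σ _

private lemma sseq_succ {N : ℕ} (lam : Fin (N + 1) → ℝ) (σ : Equiv.Perm (Fin (N + 1)))
    {k : ℕ} (hk : k < N + 1) : sseq lam σ k = aseq lam σ k + sseq lam σ (k + 1) :=
  Finset.sum_eq_sum_Ico_succ_bot hk _

private lemma sseq_pos {N : ℕ} {lam : Fin (N + 1) → ℝ} (hlam : ∀ i, 0 < lam i)
    (σ : Equiv.Perm (Fin (N + 1))) {k : ℕ} (hk : k ≤ N) : 0 < sseq lam σ k := by
  rw [sseq_succ lam σ (by omega)]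
  have h1 := aseq_pos hlam σ (show k < N + 1 by omega)
  have h2 := sseq_nonneg hlam σ (k + 1)
  linarith

private lemma sseq_top {N : ℕ} (lam : Fin (N + 1) → ℝ) (σ : Equiv.Perm (Fin (N + 1))) :
    sseq lam σ (N + 1) = 0 := by
  simp [sseq]

private lemma ico_shift_sum (f : ℕ → ℝ) (b c : ℕ) :
    ∑ k ∈ Finset.Ico b c, f (k + 1) = ∑ k ∈ Finset.Ico (b + 1) (c + 1), f k := by
  rw [Finset.sum_Ico_eq_sum_range, Finset.sum_Ico_eq_sum_range]
  rw [show c + 1 - (b + 1) = c - b by omega]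
  exact Finset.sum_congr rfl fun k _ => by congr 1; omega

private lemma ico_shift_prod (f : ℕ → ℝ) (b c : ℕ) :
    ∏ k ∈ Finset.Ico b c, f (k + 1) = ∏ k ∈ Finset.Ico (b + 1) (c + 1), f k := by
  rw [Finset.prod_Ico_eq_prod_range, Finset.prod_Ico_eq_prod_range]
  rw [show c + 1 - (b + 1) = c - b by omega]
  exact Finset.prod_congr rfl fun k _ => by congr 1; omega

private lemma sum_filter_le_eq {N : ℕ} (f : Fin (N + 1) → ℝ) (j : Fin (N + 1)) :
    ∑ j' ∈ Finset.univ.filter (fun j' => j ≤ j'), f j'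
      = ∑ k ∈ Finset.Ico (j : ℕ) (N + 1), (if h : k < N + 1 then f ⟨k, h⟩ else 0) := by
  rw [Finset.sum_filter]
  have h1 : ∑ j' : Fin (N + 1), (if j ≤ j' then f j' else 0)
      = ∑ k ∈ Finset.range (N + 1),
          (fun k => if h : k < N + 1 then (if (j : ℕ) ≤ k then f ⟨k, h⟩ else 0) else 0) k := by
    rw [← Fin.sum_univ_eq_sum_range]
    refine Finset.sum_congr rfl fun j' _ => ?_
    simp only [dif_pos j'.isLt, Fin.eta, ← Fin.le_def]
  rw [h1]
  have h2 : Finset.Ico (j : ℕ) (N + 1) = (Finset.range (N + 1)).filter (fun k => (j : ℕ) ≤ k) := by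
    ext k; simp [Finset.mem_Ico, Nat.lt_succ_iff]; omega
  rw [h2, Finset.sum_filter]
  refine Finset.sum_congr rfl fun k hk => ?_
  simp only [Finset.mem_range] at hk
  simp only [dif_pos hk]

/-- `Pi σ` as a product over `range (N+1)` of `aseq/sseq`. -/
private lemma pi_formula {N : ℕ} {lam : Fin (N + 1) → ℝ} (hlam : ∀ i, 0 < lam i)
    (Pi : Equiv.Perm (Fin (N + 1)) → ℝ)
    (hPi : ∀ σ : Equiv.Perm (Fin (N + 1)), Pi σ = ∏ i : Fin (N + 1),
        (if (i : ℕ) + 1 < N + 1 then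
          lam (σ i) / ∑ j ∈ Finset.univ.filter (fun j : Fin (N + 1) => i ≤ j), lam (σ j)
        else 1))
    (σ : Equiv.Perm (Fin (N + 1))) :
    Pi σ = ∏ k ∈ Finset.range (N + 1), aseq lam σ k / sseq lam σ k := by
  rw [hPi σ, ← Fin.prod_univ_eq_prod_range (fun k => aseq lam σ k / sseq lam σ k) (N + 1)]
  refine Finset.prod_congr rfl fun j _ => ?_
  by_cases h : (j : ℕ) + 1 < N + 1
  · rw [if_pos h, aseq_val lam σ j, sum_filter_le_eq (fun j' => lam (σ j')) j]
    rfl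
  · rw [if_neg h]
    have hj : (j : ℕ) = N := by have := j.isLt; omega
    have hS : sseq lam σ (j : ℕ) = aseq lam σ (j : ℕ) := by
      simp [sseq, hj, Nat.Ico_succ_singleton]
    rw [hS, div_self (ne_of_gt (aseq_pos hlam σ j.isLt))]

/-- Key step: the ratio `Pi (q * cycleRange i) / Pi q`. -/
private lemma key_ratio {N : ℕ} {lam : Fin (N + 1) → ℝ} (hlam : ∀ i, 0 < lam i)
    (Pi : Equiv.Perm (Fin (N + 1)) → ℝ)
    (hPi : ∀ σ : Equiv.Perm (Fin (N + 1)), Pi σ = ∏ i : Fin (N + 1),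
        (if (i : ℕ) + 1 < N + 1 then
          lam (σ i) / ∑ j ∈ Finset.univ.filter (fun j : Fin (N + 1) => i ≤ j), lam (σ j)
        else 1))
    (q : Equiv.Perm (Fin (N + 1))) (i : Fin (N + 1)) :
    Pi (q * Fin.cycleRange i)
      = Pi q * ∏ k ∈ Finset.Ico 1 ((i : ℕ) + 1),
          sseq lam q k / (sseq lam q (k + 1) + aseq lam q 0) := by
  set m := (i : ℕ) with hm
  have hmN : m ≤ N := Nat.lt_succ_iff.mp i.isLt
  set σ := q * Fin.cycleRange i with hσ
  set a := aseq lam q with ha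
  set s := sseq lam q with hs
  -- values of the rearranged sequence
  have hA' : ∀ k, aseq lam σ k = if k < m then a (k + 1) else if k = m then a 0 else a k := by
    intro k
    by_cases hk : k < N + 1
    · have h0 : aseq lam σ k = lam (q (Fin.cycleRange i ⟨k, hk⟩)) := by
        simp only [aseq, hσ, Equiv.Perm.mul_apply, dif_pos hk]
      rw [h0, aseq_val lam q]
      rcases lt_trichotomy k m with h | h | h
      · rw [if_pos h]
        have hlt : (⟨k, hk⟩ : Fin (N + 1)) < i := by rw [Fin.lt_def]; exact h
        rw [Fin.coe_cycleRange_of_lt hlt]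
      · rw [if_neg (by omega), if_pos h]
        have heq : (⟨k, hk⟩ : Fin (N + 1)) = i := by apply Fin.ext; exact h
        rw [heq, Fin.cycleRange_self]
        rfl
      · rw [if_neg (by omega), if_neg (by omega)]
        have hgt : i < (⟨k, hk⟩ : Fin (N + 1)) := by rw [Fin.lt_def]; exact h
        rw [Fin.cycleRange_of_gt hgt]
    · rw [if_neg (by omega), if_neg (by omega)]
      simp [aseq, hk, ha]
  -- tail sums of the rearranged sequence
  have hS'' : ∀ k, m < k → sseq lam σ k = s k := by
    intro k hk
    refine Finset.sum_congr rfl fun j hj => ?_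
    rw [Finset.mem_Ico] at hj
    rw [hA' j, if_neg (by omega), if_neg (by omega)]
  have hS' : ∀ k, k ≤ m → sseq lam σ k = a 0 + s (k + 1) := by
    intro k hk
    have hsplit : sseq lam σ k
        = ∑ j ∈ Finset.Ico k (m + 1), aseq lam σ j
          + ∑ j ∈ Finset.Ico (m + 1) (N + 1), aseq lam σ j :=
      (Finset.sum_Ico_consecutive _ (by omega) (by omega)).symm
    have h2 : ∑ j ∈ Finset.Ico (m + 1) (N + 1), aseq lam σ j
        = ∑ j ∈ Finset.Ico (m + 1) (N + 1), a j := by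
      refine Finset.sum_congr rfl fun j hj => ?_
      rw [Finset.mem_Ico] at hj
      rw [hA' j, if_neg (by omega), if_neg (by omega)]
    have h3 : ∑ j ∈ Finset.Ico k (m + 1), aseq lam σ j
        = (∑ j ∈ Finset.Ico k m, aseq lam σ j) + aseq lam σ m :=
      Finset.sum_Ico_succ_top hk _
    have h4 : ∑ j ∈ Finset.Ico k m, aseq lam σ j = ∑ j ∈ Finset.Ico k m, a (j + 1) := by
      refine Finset.sum_congr rfl fun j hj => ?_
      rw [Finset.mem_Ico] at hj
      rw [hA' j, if_pos hj.2]
    have h5 : aseq lam σ m = a 0 := by rw [hA' m, if_neg (by omega), if_pos rfl]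
    have h6 : ∑ j ∈ Finset.Ico k m, a (j + 1) = ∑ j ∈ Finset.Ico (k + 1) (m + 1), a j :=
      ico_shift_sum a k m
    have h7 : (∑ j ∈ Finset.Ico (k + 1) (m + 1), a j)
        + ∑ j ∈ Finset.Ico (m + 1) (N + 1), a j = s (k + 1) :=
      Finset.sum_Ico_consecutive _ (by omega) (by omega)
    rw [hsplit, h2, h3, h4, h5, h6]
    linarith
  -- positivity facts
  have ha0 : 0 < a 0 := aseq_pos hlam q (by omega)
  have hspos : ∀ k, k ≤ N → 0 < s k := fun k hk => sseq_pos hlam q hk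
  have hsnn : ∀ k, 0 ≤ s k := fun k => sseq_nonneg hlam q k
  -- expand both Pi's
  rw [pi_formula hlam Pi hPi σ, pi_formula hlam Pi hPi q]
  -- split products at m+1
  have hsplitP : ∀ (f : ℕ → ℝ), ∏ k ∈ Finset.range (N + 1), f k
      = ((∏ k ∈ Finset.Ico 0 1, f k) * ∏ k ∈ Finset.Ico 1 (m + 1), f k)
        * ∏ k ∈ Finset.Ico (m + 1) (N + 1), f k := by
    intro f
    rw [Finset.range_eq_Ico, ← Finset.prod_Ico_consecutive f (Nat.zero_le (m + 1)) (by omega),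
      ← Finset.prod_Ico_consecutive f (Nat.zero_le 1) (by omega)]
  rw [hsplitP, hsplitP]
  have hIco01 : ∀ (f : ℕ → ℝ), ∏ k ∈ Finset.Ico 0 1, f k = f 0 := by
    intro f; rw [Nat.Ico_succ_singleton, Finset.prod_singleton]
  -- compute the three pieces for σ
  have hT : ∏ k ∈ Finset.Ico (m + 1) (N + 1), aseq lam σ k / sseq lam σ k
      = ∏ k ∈ Finset.Ico (m + 1) (N + 1), a k / s k := by
    refine Finset.prod_congr rfl fun k hk => ?_
    rw [Finset.mem_Ico] at hk
    rw [hA' k, if_neg (by omega), if_neg (by omega), hS'' k (by omega)]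
  have hHead : (∏ k ∈ Finset.Ico 0 1, aseq lam σ k / sseq lam σ k)
      * ∏ k ∈ Finset.Ico 1 (m + 1), aseq lam σ k / sseq lam σ k
      = ∏ k ∈ Finset.Ico 0 (m + 1), aseq lam σ k / sseq lam σ k :=
    Finset.prod_Ico_consecutive _ (Nat.zero_le 1) (by omega)
  have hHead2 : ∏ k ∈ Finset.Ico 0 (m + 1), aseq lam σ k / sseq lam σ k
      = (∏ k ∈ Finset.Ico 1 (m + 1), a k / (a 0 + s k)) * (a 0 / (a 0 + s (m + 1))) := by
    rw [Finset.prod_Ico_succ_top (Nat.zero_le m)]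
    congr 1
    · have : ∏ k ∈ Finset.Ico 0 m, aseq lam σ k / sseq lam σ k
          = ∏ k ∈ Finset.Ico 0 m, (fun k => a k / (a 0 + s k)) (k + 1) := by
        refine Finset.prod_congr rfl fun k hk => ?_
        rw [Finset.mem_Ico] at hk
        rw [hA' k, if_pos hk.2, hS' k (by omega)]
      rw [this, ico_shift_prod (fun k => a k / (a 0 + s k)) 0 m]
    · rw [hA' m, if_neg (by omega), if_pos rfl, hS' m le_rfl]
  -- the core identity
  have hcore : (∏ k ∈ Finset.Ico 1 (m + 1), a k / (a 0 + s k)) * (a 0 / (a 0 + s (m + 1)))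
      = (a 0 / s 0) * ((∏ k ∈ Finset.Ico 1 (m + 1), a k / s k)
        * ∏ k ∈ Finset.Ico 1 (m + 1), s k / (s (k + 1) + a 0)) := by
    have hcomb : (∏ k ∈ Finset.Ico 1 (m + 1), a k / s k)
        * ∏ k ∈ Finset.Ico 1 (m + 1), s k / (s (k + 1) + a 0)
        = ∏ k ∈ Finset.Ico 1 (m + 1), a k / (s (k + 1) + a 0) := by
      rw [← Finset.prod_mul_distrib]
      refine Finset.prod_congr rfl fun k hk => ?_
      rw [Finset.mem_Ico] at hk
      have hks : s k ≠ 0 := ne_of_gt (hspos k (by omega))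
      field_simp
    rw [hcomb, Finset.prod_div_distrib, Finset.prod_div_distrib, div_mul_div_comm,
      div_mul_div_comm]
    have hden1 : (∏ k ∈ Finset.Ico 1 (m + 1), (a 0 + s k)) * (a 0 + s (m + 1))
        = ∏ k ∈ Finset.Ico 1 (m + 2), (a 0 + s k) := by
      rw [Finset.prod_Ico_succ_top (by omega : 1 ≤ m + 1)]
    have hden2 : s 0 * ∏ k ∈ Finset.Ico 1 (m + 1), (s (k + 1) + a 0)
        = ∏ k ∈ Finset.Ico 1 (m + 2), (a 0 + s k) := by
      rw [show (fun k => s (k + 1) + a 0) = (fun k => (fun j => a 0 + s j) (k + 1)) by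
        funext k; ring]
      rw [ico_shift_prod (fun j => a 0 + s j) 1 (m + 1)]
      have h01 : s 0 = a 0 + s 1 := sseq_succ lam q (by omega)
      rw [Finset.prod_eq_prod_Ico_succ_bot (by omega : 1 < m + 2) (fun j => a 0 + s j), h01]
    rw [hden1, hden2, mul_comm (a 0) (∏ k ∈ Finset.Ico 1 (m + 1), a k)]
  rw [hT, hHead, hHead2, hIco01]
  have hq0 : aseq lam q 0 / sseq lam q 0 = a 0 / s 0 := rfl
  rw [hq0]
  set T := ∏ k ∈ Finset.Ico (m + 1) (N + 1), a k / s k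
  set B := ∏ k ∈ Finset.Ico 1 (m + 1), a k / s k
  set C := ∏ k ∈ Finset.Ico 1 (m + 1), s k / (s (k + 1) + a 0)
  set H := ∏ k ∈ Finset.Ico 1 (m + 1), a k / (a 0 + s k)
  -- goal: H * (a0/(a0+s(m+1))) * T = (a0/s0 * B * T) * C
  calc H * (a 0 / (a 0 + s (m + 1))) * T = (H * (a 0 / (a 0 + s (m + 1)))) * T := by ring
    _ = ((a 0 / s 0) * (B * C)) * T := by rw [hcore]
    _ = a 0 / s 0 * B * T * C := by ring

theorem stmt_1 (n : ℕ) (hn : 0 < n) (lam : Fin n → ℝ) (hlam : ∀ i, 0 < lam i)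
    (Pi : Equiv.Perm (Fin n) → ℝ)
    (hPi : ∀ σ : Equiv.Perm (Fin n), Pi σ = ∏ i : Fin n,
        (if (i : ℕ) + 1 < n then
          lam (σ i) / ∑ j ∈ Finset.univ.filter (fun j : Fin n => i ≤ j), lam (σ j)
        else 1))
    (q : Equiv.Perm (Fin n)) :
    Pi q * ∑ i : Fin n, lam (q i)
      = lam (q ⟨0, hn⟩) * ∑ i : Fin n, Pi (q * Fin.cycleRange i) := by
  obtain ⟨N, rfl⟩ : ∃ N, n = N + 1 := ⟨n - 1, by omega⟩
  set a := aseq lam q with ha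
  set s := sseq lam q with hs
  have ha0 : 0 < a 0 := aseq_pos hlam q (by omega)
  have hsnn : ∀ k, 0 ≤ s k := fun k => sseq_nonneg hlam q k
  set R : ℕ → ℝ := fun j => ∏ k ∈ Finset.Ico 1 (j + 1), s k / (s (k + 1) + a 0) with hR
  set D : ℕ → ℝ := fun j => (s (j + 1) + a 0) * R j with hD
  have hDstep : ∀ j, a 0 * R j = D j - D (j + 1) := by
    intro j
    have hRsucc : R (j + 1) = R j * (s (j + 1) / (s (j + 2) + a 0)) :=
      Finset.prod_Ico_succ_top (by omega) _
    have hX : s (j + 2) + a 0 ≠ 0 := ne_of_gt (by have := hsnn (j + 2); linarith)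
    have hD1 : D (j + 1) = s (j + 1) * R j := by
      rw [hD]; simp only []; rw [hRsucc]
      field_simp
    rw [hD1, hD]; ring
  have hD0 : D 0 = s 0 := by
    have h1 : R 0 = 1 := by simp [hR]
    have h01 : s 0 = a 0 + s 1 := sseq_succ lam q (by omega)
    rw [hD]; simp only []; rw [h1, h01]; ring
  have hDN : D (N + 1) = 0 := by
    have hRz : R (N + 1) = 0 := by
      have hmem : N + 1 ∈ Finset.Ico 1 (N + 1 + 1) := Finset.mem_Ico.mpr ⟨by omega, by omega⟩
      have hz : s (N + 1) / (s (N + 1 + 1) + a 0) = 0 := by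
        have h0 : s (N + 1) = 0 := sseq_top lam q
        rw [h0, zero_div]
      exact Finset.prod_eq_zero hmem hz
    rw [hD]; simp only []; rw [hRz, mul_zero]
  have htel : ∑ k ∈ Finset.range (N + 1), (D k - D (k + 1)) = D 0 - D (N + 1) :=
    Finset.sum_range_sub' D (N + 1)
  have hsum1 : ∑ i : Fin (N + 1), lam (q i) = s 0 := by
    rw [hs]
    show _ = ∑ j ∈ Finset.Ico 0 (N + 1), aseq lam q j
    rw [← Finset.range_eq_Ico, ← Fin.sum_univ_eq_sum_range (aseq lam q) (N + 1)]
    exact Finset.sum_congr rfl fun j _ => aseq_val lam q j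
  have hq0 : lam (q ⟨0, hn⟩) = a 0 := aseq_val lam q ⟨0, hn⟩
  rw [hsum1, hq0]
  have hkey : ∀ i : Fin (N + 1), Pi (q * Fin.cycleRange i) = Pi q * R (i : ℕ) := fun i =>
    key_ratio hlam Pi hPi q i
  calc Pi q * s 0 = Pi q * (D 0 - D (N + 1)) := by rw [hD0, hDN]; ring
    _ = Pi q * ∑ k ∈ Finset.range (N + 1), (D k - D (k + 1)) := by rw [htel]
    _ = Pi q * ∑ k ∈ Finset.range (N + 1), a 0 * R k := by
        congr 1; exact Finset.sum_congr rfl fun k _ => (hDstep k).symm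
    _ = a 0 * ∑ k ∈ Finset.range (N + 1), Pi q * R k := by
        rw [Finset.mul_sum, Finset.mul_sum]; exact Finset.sum_congr rfl fun k _ => by ring
    _ = a 0 * ∑ i : Fin (N + 1), Pi (q * Fin.cycleRange i) := by
        rw [← Fin.sum_univ_eq_sum_range (fun k => Pi q * R k) (N + 1)]
        exact congrArg _ (Finset.sum_congr rfl fun i _ => (hkey i).symm)
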